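/- Let I, J, K be intervals in a poset P such that I ∩ J, J ∩ K, and I ∩ K are intervals, and let f : C(I) → C(J) and g : C(J) → C(K) be nonzero morphisms of P-modules. Then the composition g ∘ f is nonzero if and only if I ∩ K is nonempty and I ∩ K ⊆ J. -/

import Mathlib

open CategoryTheory
open scoped Classical ENNReal NNReal

set_option linter.unusedSectionVars false
set_option linter.unusedVariables false

/-! ## Posets, intervals, flows -/

variable {P : Type} [PartialOrder P]

/-- A subset of a poset is poset-convex if it contains every point between two of its points. -/
def PosetConvex (I : Set P) : Prop :=
  ∀ ⦃p q r : P⦄, p ∈ I → q ∈ I → p ≤ r → r ≤ q → r ∈ I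

/-- A subset of a poset is poset-connected if any two of its points are joined by a
zigzag path inside the subset. -/
def PosetConnected (I : Set P) : Prop :=
  ∀ p ∈ I, ∀ q ∈ I,
    Relation.ReflTransGen (fun a b => b ∈ I ∧ (a ≤ b ∨ b ≤ a)) p q

/-- An interval in a poset is a poset-convex and poset-connected subset. -/
def IsInterval (I : Set P) : Prop := PosetConvex I ∧ PosetConnected I

/-- `Q` is a poset-connected component of `U`: a poset-connected subset of `U`, maximal with
respect to inclusion among poset-connected subsets of `U`. -/
def IsPosetComponent (U Q : Set P) : Prop :=
  Q ⊆ U ∧ PosetConnected Q ∧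
    ∀ Q' : Set P, Q' ⊆ U → PosetConnected Q' → Q ⊆ Q' → Q' = Q

/-- A subset `Q` of `I ∩ J` is `(I,J)`-valid. -/
def IsValid (I J Q : Set P) : Prop :=
  ∀ p ∈ Q, (∀ q ∈ I, q ≤ p → q ∈ J) ∧ (∀ r ∈ J, p ≤ r → r ∈ I)

/-- An `ℝ`-flow on a poset. -/
structure RFlow (P : Type) [PartialOrder P] where
  Ω : ℝ → P → P
  mono : ∀ t : ℝ, Monotone (Ω t)
  mono_param : ∀ {t s : ℝ}, t ≤ s → ∀ p : P, Ω t p ≤ Ω s p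
  add : ∀ t s : ℝ, ∀ p : P, Ω (t + s) p = Ω t (Ω s p)
  zero : ∀ p : P, Ω 0 p = p

/-- The `t`-shift `I(t)` of a subset of a poset with an `ℝ`-flow. -/
def RFlow.shiftSet (Φ : RFlow P) (I : Set P) (t : ℝ) : Set P := {p : P | Φ.Ω t p ∈ I}

lemma RFlow.self_le (Φ : RFlow P) {t : ℝ} (ht : 0 ≤ t) (p : P) : p ≤ Φ.Ω t p := by
  have h := Φ.mono_param ht p
  rwa [Φ.zero] at h

lemma RFlow.self_le_twice (Φ : RFlow P) {t : ℝ} (ht : 0 ≤ t) (p : P) :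
    p ≤ Φ.Ω t (Φ.Ω t p) :=
  (Φ.self_le ht p).trans (Φ.self_le ht _)

lemma RFlow.omega_neg_omega (Φ : RFlow P) (t : ℝ) (p : P) : Φ.Ω (-t) (Φ.Ω t p) = p := by
  have h := Φ.add (-t) t p
  rw [neg_add_cancel, Φ.zero] at h
  exact h.symm

lemma RFlow.omega_omega_neg (Φ : RFlow P) (t : ℝ) (p : P) : Φ.Ω t (Φ.Ω (-t) p) = p := by
  have h := Φ.add t (-t) p
  rw [add_neg_cancel, Φ.zero] at h
  exact h.symm

lemma RFlow.posetConvex_shiftSet (Φ : RFlow P) {I : Set P} (hI : PosetConvex I) (t : ℝ) :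
    PosetConvex (Φ.shiftSet I t) := by
  intro p q r hp hq hpr hrq
  exact hI hp hq (Φ.mono t hpr) (Φ.mono t hrq)

lemma RFlow.posetConnected_shiftSet (Φ : RFlow P) {I : Set P} (hI : PosetConnected I) (t : ℝ) :
    PosetConnected (Φ.shiftSet I t) := by
  intro p hp q hq
  have h := hI _ hp _ hq
  have h2 := Relation.ReflTransGen.lift
    (p := fun a b : P => b ∈ Φ.shiftSet I t ∧ (a ≤ b ∨ b ≤ a)) (fun x : P => Φ.Ω (-t) x)
    (fun a b hab => ⟨show Φ.Ω t (Φ.Ω (-t) b) ∈ I by rw [Φ.omega_omega_neg]; exact hab.1,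
      hab.2.imp (fun h' => Φ.mono (-t) h') (fun h' => Φ.mono (-t) h')⟩) _ _ h
  simpa only [Function.onFun, Φ.omega_neg_omega] using h2

lemma RFlow.isInterval_shiftSet (Φ : RFlow P) {I : Set P} (hI : IsInterval I) (t : ℝ) :
    IsInterval (Φ.shiftSet I t) :=
  ⟨Φ.posetConvex_shiftSet hI.1 t, Φ.posetConnected_shiftSet hI.2 t⟩

lemma RFlow.shiftSet_nonempty (Φ : RFlow P) {I : Set P} (hI : I.Nonempty) (t : ℝ) :
    (Φ.shiftSet I t).Nonempty := by
  obtain ⟨x, hx⟩ := hI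
  exact ⟨Φ.Ω (-t) x, show Φ.Ω t (Φ.Ω (-t) x) ∈ I by rw [Φ.omega_omega_neg]; exact hx⟩

/-! ## Characteristic (interval) persistence modules -/

variable (K : Type) [Field K]

/-- The pointwise value of the characteristic module of `I`, as a submodule of `K`. -/
noncomputable def charSub (I : Set P) (p : P) : Submodule K K :=
  if p ∈ I then ⊤ else ⊥

lemma charSub_eq_top {I : Set P} {p : P} (hp : p ∈ I) : charSub K I p = ⊤ := if_pos hp

lemma charSub_eq_bot {I : Set P} {p : P} (hp : p ∉ I) : charSub K I p = ⊥ := if_neg hp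

lemma charElt_eq_zero {I : Set P} {p : P} (hp : p ∉ I) (x : ↥(charSub K I p)) : x = 0 := by
  exact Subtype.ext ((Submodule.eq_bot_iff _).mp (charSub_eq_bot K hp) (x : K) x.2)

/-- The structure maps of the characteristic module of `I`. -/
noncomputable def charMap (I : Set P) (p q : P) :
    ↥(charSub K I p) →ₗ[K] ↥(charSub K I q) :=
  if h : p ∈ I ∧ q ∈ I then
    { toFun := fun x => ⟨(x : K), by rw [charSub_eq_top K h.2]; exact Submodule.mem_top⟩
      map_add' := fun x y => rfl
      map_smul' := fun c x => rfl }
  else 0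

lemma charMap_id (I : Set P) (p : P) : charMap K I p p = LinearMap.id := by
  by_cases hp : p ∈ I
  · simp only [charMap, dif_pos (And.intro hp hp)]
    rfl
  · ext x
    rw [charElt_eq_zero K hp x]
    simp

lemma charMap_comp {I : Set P} (hI : PosetConvex I) {p q r : P} (hpq : p ≤ q) (hqr : q ≤ r) :
    (charMap K I q r).comp (charMap K I p q) = charMap K I p r := by
  by_cases hp : p ∈ I
  · by_cases hr : r ∈ I
    · have hq : q ∈ I := hI hp hr hpq hqr
      ext x
      simp only [charMap, dif_pos (And.intro hp hq), dif_pos (And.intro hq hr),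
        dif_pos (And.intro hp hr), LinearMap.comp_apply, LinearMap.coe_mk, AddHom.coe_mk]
    · ext x
      exact congrArg Subtype.val
        ((charElt_eq_zero K hr ((charMap K I q r).comp (charMap K I p q) x)).trans
          (charElt_eq_zero K hr (charMap K I p r x)).symm)
  · ext x
    rw [charElt_eq_zero K hp x]
    simp

/-- The characteristic persistence module `C(I)` of a poset-convex subset `I`. -/
noncomputable def charMod (I : Set P) (hI : PosetConvex I) : P ⥤ ModuleCat K where
  obj p := ModuleCat.of K ↥(charSub K I p)
  map {p q} h := ModuleCat.ofHom (charMap K I p q)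
  map_id p := by rw [charMap_id K I p]; rfl
  map_comp {p q r} h1 h2 := by rw [← ModuleCat.ofHom_comp, charMap_comp K hI (leOfHom h1) (leOfHom h2)]

/-- The zero persistence module, realized as the characteristic module of the empty interval. -/
noncomputable def zeroPMod : P ⥤ ModuleCat K :=
  charMod K (∅ : Set P) (fun _ _ _ hp _ _ _ => absurd hp (Set.notMem_empty _))

/-! ## Barcodes and interval-decomposable modules -/

/-- A barcode over a poset: a multiset of nonempty intervals, encoded as an indexed family. -/
structure Barcode (P : Type) [PartialOrder P] where
  ι : Type
  B : ι → Set P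
  interval : ∀ a : ι, IsInterval (B a)
  nonempty : ∀ a : ι, (B a).Nonempty

/-- The interval-decomposable module `⊕_{a} C(B a)` associated to a barcode. -/
noncomputable def bcMod (D : Barcode P) : P ⥤ ModuleCat K where
  obj p := ModuleCat.of K (Π₀ a : D.ι, ↥(charSub K (D.B a) p))
  map {p q} h := ModuleCat.ofHom (DFinsupp.mapRange.linearMap (fun a => charMap K (D.B a) p q))
  map_id p := by
    have h : (fun a : D.ι => charMap K (D.B a) p p)
        = fun a : D.ι => (LinearMap.id : ↥(charSub K (D.B a) p) →ₗ[K] ↥(charSub K (D.B a) p)) := by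
      funext a; exact charMap_id K (D.B a) p
    show ModuleCat.ofHom (DFinsupp.mapRange.linearMap (fun a => charMap K (D.B a) p p)) = 𝟙 _
    rw [h, DFinsupp.mapRange.linearMap_id]
    rfl
  map_comp {p q r} h1 h2 := by
    have h : (fun a : D.ι => charMap K (D.B a) p r)
        = fun a : D.ι => (charMap K (D.B a) q r).comp (charMap K (D.B a) p q) := by
      funext a
      exact (charMap_comp K (D.interval a).1 (leOfHom h1) (leOfHom h2)).symm
    show ModuleCat.ofHom (DFinsupp.mapRange.linearMap (fun a => charMap K (D.B a) p r)) = _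
    rw [h, DFinsupp.mapRange.linearMap_comp]
    rfl

/-- `M` is interval-decomposable with barcode `D`. -/
def IsDecompositionOf (D : Barcode P) (M : P ⥤ ModuleCat K) : Prop :=
  Nonempty (M ≅ bcMod K D)

/-- The shift of a barcode along a flow. -/
noncomputable def Barcode.shift (D : Barcode P) (Φ : RFlow P) (t : ℝ) : Barcode P where
  ι := D.ι
  B a := Φ.shiftSet (D.B a) t
  interval a := Φ.isInterval_shiftSet (D.interval a) t
  nonempty a := Φ.shiftSet_nonempty (D.nonempty a) t

/-! ## Shifts of modules, interleavings, distances -/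

/-- The shift `M(t)` of a persistence module along a flow. -/
noncomputable def Pshift (Φ : RFlow P) (t : ℝ) (M : P ⥤ ModuleCat K) : P ⥤ ModuleCat K :=
  (Φ.mono t).functor ⋙ M

/-- The ordered pair `(M, N)` is left `ε`-interleaved. -/
noncomputable def LeftInterleaved (Φ : RFlow P) {ε : ℝ} (hε : 0 ≤ ε)
    (M N : P ⥤ ModuleCat K) : Prop :=
  ∃ (f : M ⟶ Pshift K Φ ε N) (g : N ⟶ Pshift K Φ ε M),
    ∀ p : P, f.app p ≫ g.app (Φ.Ω ε p) = M.map (homOfLE (Φ.self_le_twice hε p))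

/-- `M` and `N` are `ε`-interleaved. -/
noncomputable def Interleaved (Φ : RFlow P) {ε : ℝ} (hε : 0 ≤ ε)
    (M N : P ⥤ ModuleCat K) : Prop :=
  ∃ (f : M ⟶ Pshift K Φ ε N) (g : N ⟶ Pshift K Φ ε M),
    (∀ p : P, f.app p ≫ g.app (Φ.Ω ε p) = M.map (homOfLE (Φ.self_le_twice hε p))) ∧
    (∀ p : P, g.app p ≫ f.app (Φ.Ω ε p) = N.map (homOfLE (Φ.self_le_twice hε p)))

/-- The interleaving distance between two persistence modules. -/
noncomputable def dI (Φ : RFlow P) (M N : P ⥤ ModuleCat K) : ℝ≥0∞ :=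
  ⨅ (ε : NNReal) (_ : Interleaved K Φ ε.coe_nonneg M N), (ε : ℝ≥0∞)

/-- An interval `I` is `t`-trivial if the transition morphism `C(I) → C(I(t))` vanishes. -/
noncomputable def IsTrivialIv (Φ : RFlow P) {t : ℝ} (ht : 0 ≤ t)
    (I : Set P) (hI : PosetConvex I) : Prop :=
  ∀ p : P, (charMod K I hI).map (homOfLE (Φ.self_le ht p)) = 0

/-- An `ε`-correspondence between two barcodes. -/
noncomputable def IsCorrespondence (Φ : RFlow P) {ε : ℝ} (hε : 0 ≤ ε)
    (DM DN : Barcode P) (σ : Set (DM.ι × DN.ι)) : Prop :=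
  (∀ ab ∈ σ, Interleaved K Φ hε
      (charMod K (DM.B ab.1) (DM.interval ab.1).1) (charMod K (DN.B ab.2) (DN.interval ab.2).1)) ∧
  (∀ a : DM.ι, (∀ b : DN.ι, (a, b) ∉ σ) →
      Interleaved K Φ hε (charMod K (DM.B a) (DM.interval a).1) (zeroPMod K)) ∧
  (∀ b : DN.ι, (∀ a : DM.ι, (a, b) ∉ σ) →
      Interleaved K Φ hε (zeroPMod K) (charMod K (DN.B b) (DN.interval b).1))

/-- An `ε`-matching between two barcodes. -/
noncomputable def IsMatching (Φ : RFlow P) {ε : ℝ} (hε : 0 ≤ ε)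
    (DM DN : Barcode P) (σ : Set (DM.ι × DN.ι)) : Prop :=
  IsCorrespondence K Φ hε DM DN σ ∧
  (∀ a b b', (a, b) ∈ σ → (a, b') ∈ σ → b = b') ∧
  (∀ a a' b, (a, b) ∈ σ → (a', b) ∈ σ → a = a')

/-- The Hausdorff distance between (modules with) barcodes `DM`, `DN`. -/
noncomputable def dH (Φ : RFlow P) (DM DN : Barcode P) : ℝ≥0∞ :=
  ⨅ (ε : NNReal) (_ : ∃ σ : Set (DM.ι × DN.ι), IsCorrespondence K Φ ε.coe_nonneg DM DN σ),
    (ε : ℝ≥0∞)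

/-- The bottleneck distance between (modules with) barcodes `DM`, `DN`. -/
noncomputable def dB (Φ : RFlow P) (DM DN : Barcode P) : ℝ≥0∞ :=
  ⨅ (ε : NNReal) (_ : ∃ σ : Set (DM.ι × DN.ι), IsMatching K Φ ε.coe_nonneg DM DN σ),
    (ε : ℝ≥0∞)


section CompAux

variable {K}

/-- The canonical generator of `charSub K I p` for `p ∈ I`. -/
noncomputable def oneElt {I : Set P} {p : P} (hp : p ∈ I) : ↥(charSub K I p) :=
  ⟨1, by rw [charSub_eq_top K hp]; trivial⟩

lemma eq_smul_oneElt {I : Set P} {p : P} (hp : p ∈ I) (x : ↥(charSub K I p)) :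
    x = (x : K) • oneElt hp := Subtype.ext (by simp [oneElt])

lemma charMap_apply_coe {I : Set P} {p q : P} (hp : p ∈ I) (hq : q ∈ I)
    (x : ↥(charSub K I p)) : ((charMap K I p q x : ↥(charSub K I q)) : K) = (x : K) := by
  simp [charMap, dif_pos (And.intro hp hq)]

lemma charMap_eq_zero' {I : Set P} {p q : P} (h : ¬ (p ∈ I ∧ q ∈ I)) :
    charMap K I p q = 0 := dif_neg h

variable {I J : Set P} {hIc : PosetConvex I} {hJc : PosetConvex J}
  (f : charMod K I hIc ⟶ charMod K J hJc)

/-- The scalar of `f` at a point of `I ∩ J`. -/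
noncomputable def evAt {p : P} (hpI : p ∈ I) : K :=
  (show ↥(charSub K J p) from f.app p (oneElt hpI)).val

lemma nat_apply {p q : P} (h : p ≤ q) (x : ↥(charSub K I p)) :
    f.app q (charMap K I p q x) = charMap K J p q (f.app p x) := by
  have := f.naturality (homOfLE h)
  have h2 := congrArg (fun φ => φ x) this
  exact h2

lemma app_eq_zero_of_not_mem_left {p : P} (hp : p ∉ I) : f.app p = 0 := by
  ext x
  rw [charElt_eq_zero K hp x]
  exact map_zero (f.app p).hom

lemma app_eq_zero_of_not_mem_right {p : P} (hp : p ∉ J) : f.app p = 0 := by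
  ext x
  exact charElt_eq_zero K hp (f.app p x)

lemma evAt_spec {p : P} (hpI : p ∈ I) {y : ↥(charSub K J p)}
    (h : f.app p (oneElt hpI) = y) : evAt f hpI = y.val :=
  congrArg Subtype.val h

lemma app_ne_zero_iff_evAt {p : P} (hpI : p ∈ I) :
    f.app p ≠ 0 ↔ evAt f hpI ≠ 0 := by
  constructor
  · intro h
    intro h0
    apply h
    ext x
    erw [eq_smul_oneElt hpI x, LinearMap.map_smul]
    have : f.app p (oneElt hpI) = 0 := Subtype.ext h0
    rw [this, smul_zero]
    rfl
  · intro h h0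
    apply h
    rw [show evAt f hpI = (show ↥(charSub K J p) from f.app p (oneElt hpI)).val from rfl, h0]
    rfl

/-- The scalar is constant along a relation in `I ∩ J`. -/
lemma evAt_eq_of_le {p q : P} (hpI : p ∈ I) (hpJ : p ∈ J) (hqI : q ∈ I) (hqJ : q ∈ J)
    (h : p ≤ q) : evAt f hqI = evAt f hpI := by
  have h1 : charMap K I p q (oneElt hpI) = oneElt hqI := by
    apply Subtype.ext
    rw [charMap_apply_coe hpI hqI]
    rfl
  have h2 := nat_apply f h (oneElt hpI)
  rw [h1] at h2
  rw [evAt_spec f hqI h2]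
  exact charMap_apply_coe hpJ hqJ _

/-- Down-closure: if the scalar at `q ∈ I ∩ J` is nonzero and `p ∈ I`, `p ≤ q`, then `p ∈ J`. -/
lemma mem_of_le_of_evAt_ne_zero {p q : P} (hpI : p ∈ I) (hqI : q ∈ I) (hqJ : q ∈ J)
    (h : p ≤ q) (hev : evAt f hqI ≠ 0) : p ∈ J := by
  by_contra hpJ
  apply hev
  have h1 : charMap K I p q (oneElt hpI) = oneElt hqI := by
    apply Subtype.ext
    rw [charMap_apply_coe hpI hqI]
    rfl
  have h2 := nat_apply f h (oneElt hpI)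
  rw [h1, charMap_eq_zero' (fun hc => hpJ hc.1)] at h2
  have h3 : f.app q (oneElt hqI) = (0 : ↥(charSub K J q)) := h2
  rw [evAt_spec f hqI h3]
  rfl

/-- Up-closure: if the scalar at `p ∈ I ∩ J` is nonzero and `q ∈ J`, `p ≤ q`, then `q ∈ I`. -/
lemma mem_of_ge_of_evAt_ne_zero {p q : P} (hpI : p ∈ I) (hpJ : p ∈ J) (hqJ : q ∈ J)
    (h : p ≤ q) (hev : evAt f hpI ≠ 0) : q ∈ I := by
  by_contra hqI
  apply hev
  have h2 := nat_apply f h (oneElt hpI)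
  rw [charMap_eq_zero' (fun hc => hqI hc.2)] at h2
  have h4 : charMap K J p q (show ↥(charSub K J p) from f.app p (oneElt hpI)) = 0 := by
    rw [← h2]; exact map_zero (f.app q).hom
  have h5 := charMap_apply_coe (K := K) hpJ hqJ
    (show ↥(charSub K J p) from f.app p (oneElt hpI))
  rw [h4] at h5
  exact h5.symm

/-- The scalar is constant on `I ∩ J` when `I ∩ J` is poset-connected. -/
lemma evAt_const (hconn : PosetConnected (I ∩ J)) {p q : P}
    (hpI : p ∈ I) (hpJ : p ∈ J) (hqI : q ∈ I) (hqJ : q ∈ J) :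
    evAt f hpI = evAt f hqI := by
  have hz := hconn p ⟨hpI, hpJ⟩ q ⟨hqI, hqJ⟩
  clear hqJ
  revert hqI
  induction hz with
  | refl => intro hqI; rfl
  | @tail b c hpb hrel ih =>
      intro hcI
      have hbIJ : b ∈ I ∩ J := by
        rcases hpb.cases_tail with h | ⟨d, _, hdb⟩
        · rw [h]; exact ⟨hpI, hpJ⟩
        · exact hdb.1
      have hcIJ : c ∈ I ∩ J := hrel.1
      have hbc : evAt f hbIJ.1 = evAt f hcIJ.1 := by
        rcases hrel.2 with h | h
        · exact (evAt_eq_of_le f hbIJ.1 hbIJ.2 hcIJ.1 hcIJ.2 h).symm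
        · exact evAt_eq_of_le f hcIJ.1 hcIJ.2 hbIJ.1 hbIJ.2 h
      have : evAt f hcIJ.1 = evAt f hcI := rfl
      exact ((ih hbIJ.1).trans hbc).trans this

end CompAux

/-- for intervals `I`, `J`, `L` whose pairwise intersections are
intervals and nonzero morphisms `f : C(I) → C(J)`, `g : C(J) → C(L)`, the composition
`g ∘ f` is nonzero iff `I ∩ L` is nonempty and `I ∩ L ⊆ J`. -/
theorem composition_nonzero_iff (I J L : Set P)
    (hI : IsInterval I) (hJ : IsInterval J) (hL : IsInterval L)
    (hIJ : IsInterval (I ∩ J)) (hJL : IsInterval (J ∩ L)) (hIL : IsInterval (I ∩ L))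
    (f : charMod K I hI.1 ⟶ charMod K J hJ.1)
    (g : charMod K J hJ.1 ⟶ charMod K L hL.1)
    (hf : f ≠ 0) (hg : g ≠ 0) :
    f ≫ g ≠ 0 ↔ (I ∩ L).Nonempty ∧ I ∩ L ⊆ J := by
  -- f has a point with nonzero scalar
  obtain ⟨pf, hpfI, hpfJ, hpfev⟩ : ∃ p, ∃ (hpI : p ∈ I), p ∈ J ∧ evAt f hpI ≠ 0 := by
    by_contra h
    push_neg at h
    apply hf
    ext p
    by_cases hpI : p ∈ I
    · by_cases hpJ : p ∈ J
      · have happ : f.app p = 0 := by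
          by_contra hne
          exact (app_ne_zero_iff_evAt f hpI).mp hne (h p hpI hpJ)
        rw [happ]; rfl
      · rw [app_eq_zero_of_not_mem_right f hpJ]; rfl
    · rw [app_eq_zero_of_not_mem_left f hpI]; rfl
  obtain ⟨pg, hpgJ, hpgL, hpgev⟩ : ∃ p, ∃ (hpJ : p ∈ J), p ∈ L ∧ evAt g hpJ ≠ 0 := by
    by_contra h
    push_neg at h
    apply hg
    ext p
    by_cases hpJ : p ∈ J
    · by_cases hpL : p ∈ L
      · have happ : g.app p = 0 := by
          by_contra hne
          exact (app_ne_zero_iff_evAt g hpJ).mp hne (h p hpJ hpL)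
        rw [happ]; rfl
      · rw [app_eq_zero_of_not_mem_right g hpL]; rfl
    · rw [app_eq_zero_of_not_mem_left g hpJ]; rfl
  -- scalars are nonzero everywhere on the intersections
  have hfev : ∀ {a : P} (haI : a ∈ I), a ∈ J → evAt f haI ≠ 0 := by
    intro a haI haJ
    rw [← evAt_const f hIJ.2 hpfI hpfJ haI haJ]
    exact hpfev
  have hgev : ∀ {a : P} (haJ : a ∈ J), a ∈ L → evAt g haJ ≠ 0 := by
    intro a haJ haL
    rw [← evAt_const g hJL.2 hpgJ hpgL haJ haL]
    exact hpgev
  constructor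
  · intro hne
    obtain ⟨p, hp⟩ : ∃ p, (f ≫ g).app p ≠ 0 := by
      by_contra h
      push_neg at h
      apply hne
      ext p
      rw [h p]; rfl
    have hpI : p ∈ I := by
      by_contra hpI
      apply hp
      show f.app p ≫ g.app p = 0
      rw [app_eq_zero_of_not_mem_left f hpI, Limits.zero_comp]
    have hpJ : p ∈ J := by
      by_contra hpJ
      apply hp
      show f.app p ≫ g.app p = 0
      rw [app_eq_zero_of_not_mem_right f hpJ, Limits.zero_comp]
    have hpL : p ∈ L := by
      by_contra hpL
      apply hp
      show f.app p ≫ g.app p = 0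
      rw [app_eq_zero_of_not_mem_right g hpL, Limits.comp_zero]
    refine ⟨⟨p, hpI, hpL⟩, ?_⟩
    rintro q ⟨hqI, hqL⟩
    have hz := hIL.2 p ⟨hpI, hpL⟩ q ⟨hqI, hqL⟩
    clear hqI hqL
    induction hz with
    | refl => exact hpJ
    | @tail b c hpb hrel ih =>
        have hbIL : b ∈ I ∩ L := by
          rcases hpb.cases_tail with h | ⟨d, _, hdb⟩
          · rw [h]; exact ⟨hpI, hpL⟩
          · exact hdb.1
        have hcIL : c ∈ I ∩ L := hrel.1
        have hbJ : b ∈ J := ih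
        rcases hrel.2 with h | h
        · exact mem_of_ge_of_evAt_ne_zero g hbJ hbIL.2 hcIL.2 h (hgev hbJ hbIL.2)
        · exact mem_of_le_of_evAt_ne_zero f hcIL.1 hbIL.1 hbJ h (hfev hbIL.1 hbJ)
  · rintro ⟨⟨p, hpI, hpL⟩, hsub⟩
    have hpJ : p ∈ J := hsub ⟨hpI, hpL⟩
    intro h0
    have h1 : (f ≫ g).app p = 0 := by rw [h0]; rfl
    have h2 : g.app p (f.app p (oneElt hpI)) = (0 : ↥(charSub K L p)) :=
      congrArg (fun φ => φ (oneElt hpI)) h1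
    have hx : f.app p (oneElt hpI) = (evAt f hpI • oneElt hpJ : ↥(charSub K J p)) :=
      eq_smul_oneElt hpJ _
    rw [hx] at h2
    erw [LinearMap.map_smul] at h2
    have h3 : evAt f hpI • (g.app p (oneElt hpJ)) = (0 : ↥(charSub K L p)) := h2
    have h4 := congrArg Subtype.val h3
    erw [SetLike.val_smul, smul_eq_mul] at h4
    rcases mul_eq_zero.mp h4 with h | h
    · exact hfev hpI hpJ h
    · exact hgev hpJ hpL h
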